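/- Define X_{a,b;c} := Ш_{a,b}^{↑c} · β_{c,b} ∈ 𝕜B_∞ for integers a, b with a + b ≥ 0 and c ≥ 0. Then for all integers a, b with a + b ≥ 0 and b ≥ 1, and all c ≥ 0: X_{a+1,b;c} = X_{a,b;c} + X_{a+1,b−1;c} · β_{a+c+1,1}^{↑(b−1)}. -/

import Mathlib

namespace BraidPaper

/-- Relations of the infinite Artin braid group `B_∞`.  The generator with index `n : ℕ`
represents the Artin generator `σ_{n+1}` (so generators are `σ_1, σ_2, …`). -/
def BraidRels : Set (FreeGroup ℕ) :=
  {r | (∃ i : ℕ, r = .of i * .of (i + 1) * .of i * (.of (i + 1) * .of i * .of (i + 1))⁻¹) ∨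
       (∃ i j : ℕ, i + 2 ≤ j ∧ r = .of i * .of j * (.of j * .of i)⁻¹)}

/-- The infinite Artin braid group `B_∞`, presented by generators `σ_1, σ_2, …` and the
braid and far-commutativity relations. -/
abbrev BInf : Type := PresentedGroup BraidRels

/-- The Artin generator `σ i` of `B_∞` (meaningful for `i ≥ 1`). -/
def σ (i : ℕ) : BInf := PresentedGroup.of (i - 1)

lemma rel_eq_one {r : FreeGroup ℕ} (hr : r ∈ BraidRels) : PresentedGroup.mk BraidRels r = 1 := by
  have : r ∈ Subgroup.normalClosure BraidRels := Subgroup.subset_normalClosure hr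
  exact (QuotientGroup.eq_one_iff r).mpr this

lemma gen_braid (i : ℕ) :
    (PresentedGroup.of i : BInf) * .of (i + 1) * .of i = .of (i + 1) * .of i * .of (i + 1) := by
  have h := rel_eq_one (Or.inl ⟨i, rfl⟩)
  rw [map_mul, map_mul, map_mul, map_inv, map_mul, map_mul, mul_inv_eq_one] at h
  exact h

lemma gen_comm {i j : ℕ} (hij : i + 2 ≤ j) :
    (PresentedGroup.of i : BInf) * .of j = .of j * .of i := by
  have h := rel_eq_one (Or.inr ⟨i, j, hij, rfl⟩)
  rw [map_mul, map_mul, map_inv, map_mul, mul_inv_eq_one] at h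
  exact h

/-- The shift endomorphism `↑ℓ : B_∞ → B_∞`, `σ_i ↦ σ_{i+ℓ}`. -/
def shift (l : ℕ) : BInf →* BInf :=
  PresentedGroup.toGroup (f := fun n => (PresentedGroup.of (n + l) : BInf)) (by
    rintro r (⟨i, rfl⟩ | ⟨i, j, hij, rfl⟩) <;>
      simp only [map_mul, map_inv, FreeGroup.lift_apply_of, mul_inv_eq_one]
    · have h1 : i + 1 + l = i + l + 1 := by omega
      rw [h1]; exact gen_braid (i + l)
    · exact gen_comm (by omega : (i + l) + 2 ≤ j + l))

/-- The ascending product `σ_i σ_{i+1} ⋯ σ_{i+l-1}` (of `l` factors). -/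
def asc (i l : ℕ) : BInf := ((List.range l).map fun t => σ (i + t)).prod

/-- The descending product `σ_i σ_{i-1} ⋯ σ_{i-k+1}` (of `k` factors). -/
def desc (i k : ℕ) : BInf := ((List.range k).map fun t => σ (i - t)).prod

/-- The block transposition braid
`β_{k,l} = (σ_k σ_{k+1} ⋯ σ_{k+l-1})(σ_{k-1} σ_k ⋯ σ_{k+l-2}) ⋯ (σ_1 σ_2 ⋯ σ_l)`,
with `β_{k,0} = β_{0,l} = 1`. -/
def β (k l : ℕ) : BInf := ((List.range k).map fun r => asc (k - r) l).prod

/-- The positive (Garside) lift `ω_a = β_{1,1} β_{2,1} ⋯ β_{a-1,1}` of the longest element of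
the symmetric group `S_a`, with `ω_0 = ω_1 = 1`. -/
def ω (a : ℕ) : BInf := ((List.range (a - 1)).map fun t => β (t + 1) 1).prod

/-- The copy of the braid group `B_n` inside `B_∞`: the subgroup generated by
`σ_1, …, σ_{n-1}`. -/
def BSub (n : ℕ) : Subgroup BInf := Subgroup.closure {g | ∃ i, 1 ≤ i ∧ i < n ∧ g = σ i}


variable (𝕜 : Type) [CommRing 𝕜]

/-- The canonical embedding of `B_∞` into its group algebra `𝕜B_∞`. -/
noncomputable def ι (g : BInf) : MonoidAlgebra 𝕜 BInf := MonoidAlgebra.of 𝕜 BInf g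

/-- The shift `↑ℓ` extended (as an algebra homomorphism) to the group algebra `𝕜B_∞`. -/
noncomputable def shiftA (l : ℕ) : MonoidAlgebra 𝕜 BInf →ₐ[𝕜] MonoidAlgebra 𝕜 BInf :=
  MonoidAlgebra.mapDomainAlgHom 𝕜 𝕜 (shift l)

/-- The braid shuffle elements `Ш_{m,n} ∈ 𝕜B_∞` (for natural `m, n`), determined by
`Ш_{0,n} = Ш_{m,0} = 1` and the Pascal-type recursion
`Ш_{m,n} = Ш_{m-1,n} + Ш_{m,n-1} β_{m,1}^{↑(n-1)}`. -/
noncomputable def Sh : ℕ → ℕ → MonoidAlgebra 𝕜 BInf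
  | 0, _ => 1
  | _ + 1, 0 => 1
  | m + 1, n + 1 => Sh m (n + 1) + Sh (m + 1) n * ι 𝕜 (shift n (β (m + 1) 1))
  termination_by m n => (m, n)

/-- The braid shuffle elements `Ш_{m,n} ∈ 𝕜B_∞` for integer indices: `Ш_{m,n} = 0` whenever
`m < 0` or `n < 0`. -/
noncomputable def ShZ (m n : ℤ) : MonoidAlgebra 𝕜 BInf :=
  if 0 ≤ m ∧ 0 ≤ n then Sh 𝕜 m.toNat n.toNat else 0

/-- The braid Pochhammer symbol
`P_{k,n}(x,y) = (x - β_{k,1} y)(x - β_{k+1,1} y) ⋯ (x - β_{k+n-1,1} y) ∈ 𝕜B_∞`. -/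
noncomputable def Poch (k n : ℕ) (x y : 𝕜) : MonoidAlgebra 𝕜 BInf :=
  ((List.range n).map fun t =>
    algebraMap 𝕜 (MonoidAlgebra 𝕜 BInf) x - algebraMap 𝕜 (MonoidAlgebra 𝕜 BInf) y * ι 𝕜 (β (k + t) 1)).prod

/-- The combination `X_{a,b;c} := Ш_{a,b}^{↑c} β_{c,b}`. -/
noncomputable def Xcal (a b : ℤ) (c : ℕ) : MonoidAlgebra 𝕜 BInf :=
  shiftA 𝕜 c (ShZ 𝕜 a b) * ι 𝕜 (β c b.toNat)


/-! ### Auxiliary lemmas -/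

lemma sigma_comm {i j : ℕ} (hi : 1 ≤ i) (hij : i + 2 ≤ j) : Commute (σ i) (σ j) := by
  have h := gen_comm (i := i - 1) (j := j - 1) (by omega)
  show σ i * σ j = σ j * σ i
  unfold σ
  exact h

lemma asc_commute {g : BInf} {i l : ℕ} (h : ∀ t, t < l → Commute g (σ (i + t))) :
    Commute g (asc i l) := by
  apply Commute.list_prod_right
  intro x hx
  simp only [List.mem_map, List.mem_range] at hx
  obtain ⟨t, ht, rfl⟩ := hx
  exact h t ht

lemma sigma_beta_commute {m c n : ℕ} (h : c + n + 1 ≤ m) : Commute (σ m) (β c n) := by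
  apply Commute.list_prod_right
  intro x hx
  simp only [List.mem_map, List.mem_range] at hx
  obtain ⟨r, hr, rfl⟩ := hx
  apply asc_commute
  intro t ht
  exact (sigma_comm (by omega) (by omega)).symm

lemma desc_beta_commute {N K c n : ℕ} (h : c + n + K ≤ N) : Commute (desc N K) (β c n) := by
  apply Commute.list_prod_left
  intro x hx
  simp only [List.mem_map, List.mem_range] at hx
  obtain ⟨t, ht, rfl⟩ := hx
  exact sigma_beta_commute (by omega)

lemma asc_succ (i l : ℕ) : asc i (l + 1) = asc i l * σ (i + l) := by
  unfold asc
  rw [List.range_succ, List.map_append, List.prod_append]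
  simp

lemma asc_one (i : ℕ) : asc i 1 = σ i := by
  unfold asc
  simp [List.range_succ]

lemma desc_succ (i k : ℕ) : desc i (k + 1) = σ i * desc (i - 1) k := by
  unfold desc
  rw [List.range_succ_eq_map, List.map_cons, List.prod_cons, List.map_map]
  congr 2
  apply List.map_congr_left
  intro t _
  simp only [Function.comp_apply]
  congr 1
  omega

lemma desc_add (j p q : ℕ) : desc j (p + q) = desc j p * desc (j - p) q := by
  unfold desc
  rw [List.range_add, List.map_append, List.prod_append, List.map_map]
  congr 2
  apply List.map_congr_left
  intro t _
  simp only [Function.comp_apply]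
  congr 1
  omega

lemma beta_succ_left (k l : ℕ) : β (k + 1) l = asc (k + 1) l * β k l := by
  unfold β
  rw [List.range_succ_eq_map, List.map_cons, List.prod_cons, List.map_map]
  congr 2
  apply List.map_congr_left
  intro r _
  simp only [Function.comp_apply]
  congr 1
  omega

lemma beta_one (k : ℕ) : β k 1 = desc k k := by
  induction k with
  | zero => simp [β, desc]
  | succ k ih =>
    rw [beta_succ_left, asc_one, ih, desc_succ]
    norm_num

lemma beta_succ_col (k l : ℕ) : β k (l + 1) = β k l * desc (k + l) k := by
  induction k with
  | zero => simp [β, desc]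
  | succ k ih =>
    rw [beta_succ_left, beta_succ_left, ih, asc_succ]
    have hc : Commute (σ (k + 1 + l)) (β k l) := sigma_beta_commute (by omega)
    have hd : desc (k + 1 + l) (k + 1) = σ (k + 1 + l) * desc (k + l) k := by
      rw [desc_succ]; congr 2; omega
    rw [hd]
    rw [mul_assoc (asc (k+1) l), mul_assoc (asc (k+1) l), ← mul_assoc (σ (k+1+l)), hc.eq]
    group

lemma shift_σ (l : ℕ) {i : ℕ} (hi : 1 ≤ i) : shift l (σ i) = σ (i + l) := by
  unfold shift σ
  rw [PresentedGroup.toGroup.of]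
  congr 1
  omega

lemma shift_desc (l : ℕ) {j k : ℕ} (hk : k ≤ j) : shift l (desc j k) = desc (j + l) k := by
  unfold desc
  rw [map_list_prod, List.map_map]
  congr 1
  apply List.map_congr_left
  intro t ht
  simp only [List.mem_range] at ht
  simp only [Function.comp_apply]
  rw [shift_σ l (by omega)]
  congr 1
  omega

lemma shiftA_ι (l : ℕ) (g : BInf) : shiftA 𝕜 l (ι 𝕜 g) = ι 𝕜 (shift l g) := by
  unfold shiftA ι
  rw [MonoidAlgebra.mapDomainAlgHom_apply]
  show MonoidAlgebra.mapDomain (shift l) (MonoidAlgebra.single g 1) = _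
  rw [MonoidAlgebra.mapDomain_single]
  rfl

lemma ι_mul (g h : BInf) : ι 𝕜 (g * h) = ι 𝕜 g * ι 𝕜 h := map_mul (MonoidAlgebra.of 𝕜 BInf) g h

/-- The key braid identity used in the recursion. -/
lemma braid_key (A n c : ℕ) :
    shift c (shift n (β (A + 1) 1)) * β c (n + 1)
      = β c n * shift n (β (A + c + 1) 1) := by
  rw [beta_one, beta_one, shift_desc n (le_refl _), shift_desc c (by omega),
      shift_desc n (le_refl _), beta_succ_col]
  have hN : A + 1 + n + c = A + c + 1 + n := by omega
  have hcomm : Commute (desc (A + 1 + n + c) (A + 1)) (β c n) := desc_beta_commute (by omega)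
  have hsplit : desc (A + c + 1 + n) (A + c + 1) =
      desc (A + 1 + n + c) (A + 1) * desc (c + n) c := by
    have : A + c + 1 = (A + 1) + c := by omega
    rw [this, desc_add]
    congr 2 <;> omega
  rw [hsplit, ← mul_assoc, hcomm.eq, mul_assoc]

lemma Sh_zero_left (n : ℕ) : Sh 𝕜 0 n = 1 := by rw [Sh]

lemma Sh_zero_right (m : ℕ) : Sh 𝕜 m 0 = 1 := by cases m <;> rw [Sh]

lemma Sh_rec (m n : ℕ) :
    Sh 𝕜 (m + 1) (n + 1) = Sh 𝕜 m (n + 1) + Sh 𝕜 (m + 1) n * ι 𝕜 (shift n (β (m + 1) 1)) := by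
  rw [Sh]

/-- the recursion `X_{a+1,b;c} = X_{a,b;c} + X_{a+1,b-1;c} β_{a+c+1,1}^{↑(b-1)}`
for integers `a, b` with `a + b ≥ 0`, `b ≥ 1`, and any `c ≥ 0`. -/
theorem Xcal_recursion (a b : ℤ) (hab : 0 ≤ a + b) (hb : 1 ≤ b) (c : ℕ) :
    Xcal 𝕜 (a + 1) b c =
      Xcal 𝕜 a b c +
        Xcal 𝕜 (a + 1) (b - 1) c * ι 𝕜 (shift (b - 1).toNat (β (a + (c : ℤ) + 1).toNat 1)) := by
  have hbn : b.toNat = (b - 1).toNat + 1 := by omega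
  set n := (b - 1).toNat with hn
  rcases lt_or_ge a 0 with ha | ha
  · rcases eq_or_lt_of_le (show a ≤ -1 by omega) with ha1 | ha2
    · -- a = -1
      have hac : (a + (c : ℤ) + 1).toNat = c := by omega
      have h0 : Xcal 𝕜 a b c = 0 := by
        simp [Xcal, ShZ, show ¬ (0 ≤ a ∧ 0 ≤ b) by omega]
      rw [h0, zero_add]
      have e1 : Xcal 𝕜 (a + 1) b c = ι 𝕜 (β c b.toNat) := by
        simp [Xcal, ShZ, show (0:ℤ) ≤ a + 1 by omega, show (0:ℤ) ≤ b by omega,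
          show (a+1).toNat = 0 by omega, Sh_zero_left, shiftA_ι, map_one, one_mul]
      have e2 : Xcal 𝕜 (a + 1) (b - 1) c = ι 𝕜 (β c n) := by
        simp [Xcal, ShZ, show (0:ℤ) ≤ a + 1 by omega, show (0:ℤ) ≤ b - 1 by omega,
          show (a+1).toNat = 0 by omega, Sh_zero_left, shiftA_ι, map_one, one_mul]
        rw [show b.toNat - 1 = n from by omega]
        rw [if_pos hb]
      rw [e1, e2, hac, hbn, ← ι_mul]
      congr 1
      rw [beta_succ_col, beta_one, shift_desc n (le_refl _)]
    · -- a ≤ -2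
      have h1 : Xcal 𝕜 (a + 1) b c = 0 := by
        unfold Xcal ShZ; rw [if_neg (by omega)]; simp
      have h2 : Xcal 𝕜 a b c = 0 := by
        unfold Xcal ShZ; rw [if_neg (by omega)]; simp
      have h3 : Xcal 𝕜 (a + 1) (b - 1) c = 0 := by
        unfold Xcal ShZ; rw [if_neg (by omega)]; simp
      rw [h1, h2, h3, zero_mul, add_zero]
  · -- a ≥ 0
    set A := a.toNat with hA
    have hac : (a + (c : ℤ) + 1).toNat = A + c + 1 := by omega
    have hsh1 : ShZ 𝕜 (a + 1) b = Sh 𝕜 (A + 1) (n + 1) := by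
      simp only [ShZ, if_pos (show (0:ℤ) ≤ a + 1 ∧ 0 ≤ b by omega)]
      congr 1 <;> omega
    have hsh2 : ShZ 𝕜 a b = Sh 𝕜 A (n + 1) := by
      simp only [ShZ, if_pos (show (0:ℤ) ≤ a ∧ 0 ≤ b by omega)]
      congr 1 <;> omega
    have hsh3 : ShZ 𝕜 (a + 1) (b - 1) = Sh 𝕜 (A + 1) n := by
      simp only [ShZ, if_pos (show (0:ℤ) ≤ a + 1 ∧ 0 ≤ b - 1 by omega)]
      congr 1 <;> omega
    unfold Xcal
    rw [hsh1, hsh2, hsh3, hbn, ← hn, hac, Sh_rec, map_add, add_mul, map_mul, shiftA_ι]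
    congr 1
    rw [mul_assoc, mul_assoc, ← ι_mul, ← ι_mul, braid_key]


end BraidPaper
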